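/- The dagger closure is idempotent: for any submodule N of an A-module M, (N^v_M)^v_M = N^v_M. -/
import Mathlib


open TensorProduct

/-- Dagger closure of a subset `S` of an `A`-module `M` with respect to a
normalized valuation `v : A → ℝ ∪ {∞}`. -/
def daggerCl {A M : Type*} [CommRing A] [AddCommGroup M] [Module A M]
    (v : A → WithTop ℝ) (S : Set M) : Set M :=
  {x | ∀ ε : ℝ, 0 < ε → ∃ a : A, v a < (ε : WithTop ℝ) ∧ a • x ∈ S}

theorem daggerCl_idem {A : Type*} [CommRing A] [IsDomain A] [IsLocalRing A]
    (v : A → WithTop ℝ)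
    (hmul : ∀ a b : A, v (a * b) = v a + v b)
    (hadd : ∀ a b : A, min (v a) (v b) ≤ v (a + b))
    (hnonneg : ∀ a : A, 0 ≤ v a)
    (hinf : ∀ a : A, v a = ⊤ ↔ a = 0)
    {M : Type*} [AddCommGroup M] [Module A M] (N : Submodule A M) :
    daggerCl v (daggerCl v (N : Set M)) = daggerCl v (N : Set M) := by
  have hv1 : v 1 = 0 := by
    have h := hmul 1 1
    rw [mul_one] at h
    have hne : v 1 ≠ ⊤ := by
      simp [hinf]
    lift v 1 to ℝ using hne with r hr
    have : (r : WithTop ℝ) = (r : WithTop ℝ) + r := h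
    have hr2 : r = r + r := by exact_mod_cast this
    have : r = 0 := by linarith
    exact_mod_cast congrArg (fun x : ℝ => (x : WithTop ℝ)) this
  ext x
  constructor
  · intro hx ε hε
    obtain ⟨a, hva, hax⟩ := hx (ε / 2) (by linarith)
    obtain ⟨b, hvb, hbx⟩ := hax (ε / 2) (by linarith)
    refine ⟨b * a, ?_, ?_⟩
    · rw [hmul]
      calc v b + v a < (ε / 2 : ℝ) + (ε / 2 : ℝ) := by
            apply WithTop.add_lt_add_of_lt_of_le hva.ne_top hvb hva.le
        _ = (ε : WithTop ℝ) := by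
            rw [← WithTop.coe_add]; norm_num
    · rw [mul_smul]; exact hbx
  · intro hx ε hε
    obtain ⟨a, hva, hax⟩ := hx ε hε
    refine ⟨a, hva, ?_⟩
    intro δ hδ
    exact ⟨1, by rw [hv1]; exact_mod_cast hδ, by rw [one_smul]; exact hax⟩
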